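/- For any multiindex ν and α, m > 0, the squared L² norm of the monomial z^ν with respect to the measure e^{-α|z|^{2m}}dz on ℂⁿ equals (πⁿ ν!)/(m Γ(n+|ν|)) · Γ((n+|ν|)/m) / α^{(n+|ν|)/m}. -/

import Mathlib

open MeasureTheory

open Set Real
noncomputable def Gm (n : ℕ) (ν : Fin n → ℕ) (z : Fin n → ℂ) : ℝ :=
  ∏ j, ‖z j‖ ^ (2 * ν j)

noncomputable def Sq (n : ℕ) (z : Fin n → ℂ) : ℝ :=
  ∑ j, ‖z j‖ ^ 2

lemma Gm_smul (n : ℕ) (ν : Fin n → ℕ) (r : ℝ) (hr : 0 ≤ r) (z : Fin n → ℂ) :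
    Gm n ν (r • z) = r ^ (2 * ∑ j, ν j) * Gm n ν z := by
  unfold Gm
  have h : ∀ j, ‖(r • z) j‖ = r * ‖z j‖ := by
    intro j
    simp [Pi.smul_apply, abs_of_nonneg hr, norm_smul,
      Real.norm_eq_abs]
  simp_rw [h, mul_pow, Finset.prod_mul_distrib, Finset.prod_pow_eq_pow_sum]
  rw [← Finset.mul_sum]

lemma Sq_smul (n : ℕ) (r : ℝ) (z : Fin n → ℂ) :
    Sq n (r • z) = r ^ 2 * Sq n z := by
  unfold Sq
  have h : ∀ j, ‖(r • z) j‖ ^ 2 = r ^ 2 * ‖z j‖ ^ 2 := by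
    intro j
    have : ‖(r • z) j‖ = |r| * ‖z j‖ := by
      simp [Pi.smul_apply, norm_smul, Real.norm_eq_abs]
    rw [this, mul_pow, sq_abs]
  simp_rw [h, ← Finset.mul_sum]

lemma integrableOn_Gm (n : ℕ) (ν : Fin n → ℕ) (c : ℝ) :
    IntegrableOn (Gm n ν) {z : Fin n → ℂ | Sq n z < c} := by
  have hsub : {z : Fin n → ℂ | Sq n z < c} ⊆ Metric.closedBall 0 (Real.sqrt c) := by
    intro z hz
    simp only [Metric.mem_closedBall, dist_zero_right]
    rw [pi_norm_le_iff_of_nonneg (Real.sqrt_nonneg c)]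
    intro j
    have h1 : ‖z j‖ ^ 2 ≤ Sq n z := by
      unfold Sq
      exact Finset.single_le_sum (f := fun j => ‖z j‖ ^ 2)
        (fun i _ => pow_nonneg (norm_nonneg _) _) (Finset.mem_univ j)
    have h2 : ‖z j‖ ^ 2 ≤ c := le_of_lt (lt_of_le_of_lt h1 hz)
    have := Real.sqrt_le_sqrt h2
    rwa [Real.sqrt_sq (norm_nonneg _)] at this
  have hG : Continuous (Gm n ν) := by
    unfold Gm
    exact continuous_finset_prod _ fun j _ =>
      ((continuous_norm.comp (continuous_apply j)).pow _)
  exact ((hG.continuousOn).integrableOn_compact (isCompact_closedBall _ _)).mono_set hsub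
lemma Gm_nonneg (n : ℕ) (ν : Fin n → ℕ) (z : Fin n → ℂ) : 0 ≤ Gm n ν z :=
  Finset.prod_nonneg fun _ _ => pow_nonneg (norm_nonneg _) _

lemma Sq_nonneg (n : ℕ) (z : Fin n → ℂ) : 0 ≤ Sq n z :=
  Finset.sum_nonneg fun _ _ => pow_nonneg (norm_nonneg _) _

lemma Gm_continuous (n : ℕ) (ν : Fin n → ℕ) : Continuous (Gm n ν) := by
  unfold Gm
  exact continuous_finset_prod _ fun j _ =>
    ((continuous_norm.comp (continuous_apply j)).pow _)

lemma Sq_continuous (n : ℕ) : Continuous (Sq n) := by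
  unfold Sq
  exact continuous_finset_sum _ fun j _ =>
    ((continuous_norm.comp (continuous_apply j)).pow _)

lemma measSet (n : ℕ) (c : ℝ) : MeasurableSet {z : Fin n → ℂ | Sq n z < c} :=
  measurableSet_lt (Sq_continuous n).measurable measurable_const

lemma finrank_pi_complex (n : ℕ) : Module.finrank ℝ (Fin n → ℂ) = 2 * n := by
  simp [Module.finrank_pi_fintype, Complex.finrank_real_complex, mul_comm]

lemma scaling (n : ℕ) (ν : Fin n → ℕ) (c : ℝ) (hc : 0 < c) :
    ∫ z in {z : Fin n → ℂ | Sq n z < c}, Gm n ν z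
      = c ^ (n + ∑ j, ν j) * ∫ z in {z : Fin n → ℂ | Sq n z < 1}, Gm n ν z := by
  set R := Real.sqrt c with hR
  have hR0 : 0 < R := Real.sqrt_pos.mpr hc
  have hRsq : R ^ 2 = c := Real.sq_sqrt hc.le
  have key := MeasureTheory.Measure.integral_comp_smul (μ := (volume : Measure (Fin n → ℂ)))
    (f := ({z : Fin n → ℂ | Sq n z < 1}).indicator (Gm n ν)) R⁻¹
  rw [finrank_pi_complex] at key
  have hL : (fun x : Fin n → ℂ => ({z : Fin n → ℂ | Sq n z < 1}).indicator (Gm n ν) (R⁻¹ • x))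
      = fun x => ({z : Fin n → ℂ | Sq n z < c}).indicator
          (fun z => (R⁻¹) ^ (2 * ∑ j, ν j) * Gm n ν z) x := by
    funext x
    have hmem : (R⁻¹ • x ∈ {z : Fin n → ℂ | Sq n z < 1}) ↔ x ∈ {z : Fin n → ℂ | Sq n z < c} := by
      simp only [mem_setOf_eq, Sq_smul]
      rw [inv_pow, hRsq]
      rw [inv_mul_lt_iff₀ hc, mul_one]
    by_cases hx : x ∈ {z : Fin n → ℂ | Sq n z < c}
    · rw [Set.indicator_of_mem (hmem.mpr hx), Set.indicator_of_mem hx,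
        Gm_smul n ν R⁻¹ (inv_nonneg.mpr hR0.le) x]
    · rw [Set.indicator_of_notMem (fun h => hx (hmem.mp h)), Set.indicator_of_notMem hx]
  rw [hL] at key
  rw [integral_indicator (measSet n c), integral_indicator (measSet n 1)] at key
  rw [integral_const_mul] at key
  have hpow : |((R⁻¹ : ℝ) ^ (2 * n))⁻¹| = R ^ (2 * n) := by
    rw [← inv_pow, inv_inv, abs_of_nonneg (pow_nonneg hR0.le _)]
  rw [hpow, smul_eq_mul] at key
  have : ∫ z in {z : Fin n → ℂ | Sq n z < c}, Gm n ν z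
      = R ^ (2 * ∑ j, ν j) * (R ^ (2 * n) * ∫ z in {z : Fin n → ℂ | Sq n z < 1}, Gm n ν z) := by
    rw [← key]
    rw [← mul_assoc, ← mul_pow, mul_inv_cancel₀ hR0.ne', one_pow, one_mul]
  rw [this, ← mul_assoc, ← pow_add]
  congr 1
  rw [show 2 * (∑ j, ν j) + 2 * n = 2 * (n + ∑ j, ν j) by ring, pow_mul, hRsq]
lemma complex_moment (k : ℕ) :
    ∫ w : ℂ, ‖w‖ ^ (2 * k) * Real.exp (-‖w‖ ^ 2)
      = Real.pi * (k.factorial : ℝ) := by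
  have h := Complex.integral_rpow_mul_exp_neg_rpow (p := 2) (q := (2 * k : ℕ))
    (by norm_num) (lt_of_lt_of_le (by norm_num) (Nat.cast_nonneg _))
  have heq : ∀ w : ℂ, ‖w‖ ^ ((2 * k : ℕ) : ℝ) * Real.exp (-‖w‖ ^ (2 : ℝ))
      = ‖w‖ ^ (2 * k) * Real.exp (-‖w‖ ^ 2) := by
    intro w
    rw [Real.rpow_natCast, show (2:ℝ) = ((2:ℕ):ℝ) by norm_num, Real.rpow_natCast]
  simp_rw [heq] at h
  rw [h]
  have : (((2 * k : ℕ) : ℝ) + 2) / 2 = (k : ℝ) + 1 := by push_cast; ring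
  rw [this, Real.Gamma_nat_eq_factorial]
  ring

lemma anchor (n : ℕ) (ν : Fin n → ℕ) :
    ∫ z : Fin n → ℂ, Gm n ν z * Real.exp (-Sq n z)
      = Real.pi ^ n * ∏ j, ((ν j).factorial : ℝ) := by
  have h1 : ∀ z : Fin n → ℂ, Gm n ν z * Real.exp (-Sq n z)
      = ∏ j, (‖z j‖ ^ (2 * ν j) * Real.exp (-‖z j‖ ^ 2)) := by
    intro z
    rw [Finset.prod_mul_distrib]
    unfold Gm Sq
    congr 1
    rw [← Real.exp_sum]
    congr 1
    rw [← Finset.sum_neg_distrib]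
  simp_rw [h1]
  rw [MeasureTheory.integral_fintype_prod_volume_eq_prod (ι := Fin n)
    (f := fun j (w : ℂ) => ‖w‖ ^ (2 * ν j) * Real.exp (-‖w‖ ^ 2))]
  simp_rw [complex_moment]
  rw [Finset.prod_mul_distrib, Finset.prod_const, Finset.card_univ, Fintype.card_fin]
lemma exp_neg_image : (fun u : ℝ => Real.exp (-u)) '' (Ioi 0) = Ioo (0:ℝ) 1 := by
  ext t
  constructor
  · rintro ⟨u, hu, rfl⟩
    exact ⟨Real.exp_pos _, by rw [Real.exp_lt_one_iff]; simpa using hu⟩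
  · rintro ⟨ht0, ht1⟩
    refine ⟨-Real.log t, neg_pos.mpr (Real.log_neg ht0 ht1), ?_⟩
    show Real.exp (-(-Real.log t)) = t
    rw [neg_neg, Real.exp_log ht0]

lemma exp_neg_deriv : ∀ u ∈ Ioi (0:ℝ),
    HasDerivWithinAt (fun u : ℝ => Real.exp (-u)) (-Real.exp (-u)) (Ioi 0) u := by
  intro u _
  have : HasDerivAt (fun u : ℝ => Real.exp (-u)) (Real.exp (-u) * (-1)) u :=
    (Real.hasDerivAt_exp (-u)).comp u (hasDerivAt_neg u)
  simpa [mul_comm] using this.hasDerivWithinAt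

lemma exp_neg_injOn : InjOn (fun u : ℝ => Real.exp (-u)) (Ioi 0) :=
  fun a _ b _ h => by
    have := Real.exp_injective h
    linarith [neg_injective this]

lemma log_pow_integral (s α : ℝ) (hs : 0 ≤ s) (hα : 0 < α) :
    (∫ t in Ioo (0:ℝ) 1, (Real.log t⁻¹ / α) ^ s)
      = Real.Gamma (s + 1) * α ^ (-s) ∧
    IntegrableOn (fun t => (Real.log t⁻¹ / α) ^ s) (Ioo (0:ℝ) 1) := by
  have hgamma : Real.Gamma (s+1) = ∫ u in Ioi (0:ℝ), Real.exp (-u) * u ^ s := by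
    rw [Real.Gamma_eq_integral (by linarith)]
    simp
  have hcongr : ∀ u ∈ Ioi (0:ℝ),
      |(-Real.exp (-u))| • (Real.log (Real.exp (-u))⁻¹ / α) ^ s
        = (Real.exp (-u) * u ^ s) * α ^ (-s) := by
    intro u hu
    rw [abs_neg, abs_of_pos (Real.exp_pos _), Real.log_inv, Real.log_exp, neg_neg]
    rw [smul_eq_mul, Real.div_rpow (le_of_lt hu) hα.le, Real.rpow_neg hα.le, div_eq_mul_inv]
    ring
  have hbase : IntegrableOn (fun u : ℝ => (Real.exp (-u) * u ^ s) * α ^ (-s)) (Ioi 0) := by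
    have := (Real.GammaIntegral_convergent (show (0:ℝ) < s + 1 by linarith)).mul_const (α ^ (-s))
    simpa [IntegrableOn] using this
  constructor
  · rw [← exp_neg_image,
      MeasureTheory.integral_image_eq_integral_abs_deriv_smul measurableSet_Ioi
        exp_neg_deriv exp_neg_injOn]
    rw [setIntegral_congr_fun measurableSet_Ioi hcongr, integral_mul_const, hgamma]
  · rw [← exp_neg_image,
      MeasureTheory.integrableOn_image_iff_integrableOn_abs_deriv_smul measurableSet_Ioi
        exp_neg_deriv exp_neg_injOn]
    exact hbase.congr_fun (fun u hu => (hcongr u hu).symm) measurableSet_Ioi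
lemma key (n : ℕ) (hn : 0 < n) (ν : Fin n → ℕ) (α m : ℝ) (hα : 0 < α) (hm : 0 < m) :
    ∫ z : Fin n → ℂ, Gm n ν z * Real.exp (-α * Sq n z ^ m)
      = (∫ z in {z : Fin n → ℂ | Sq n z < 1}, Gm n ν z) *
          (Real.Gamma (((n + ∑ j, ν j : ℕ) : ℝ) / m + 1) *
            α ^ (-(((n + ∑ j, ν j : ℕ) : ℝ) / m))) := by
  set b : ℕ := n + ∑ j, ν j with hb
  set s : ℝ := (b : ℝ) / m with hsdef
  have hbpos : 0 < (b : ℝ) := by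
    have : 0 < b := Nat.lt_of_lt_of_le hn (Nat.le_add_right n _)
    exact_mod_cast this
  have hs0 : 0 < s := div_pos hbpos hm
  set C0 : ℝ := ∫ z in {z : Fin n → ℂ | Sq n z < 1}, Gm n ν z with hC0def
  have hC0 : 0 ≤ C0 :=
    setIntegral_nonneg (measSet n 1) fun z _ => Gm_nonneg n ν z
  set κ : ENNReal := ENNReal.ofReal C0 with hκdef
  have hκne : κ ≠ ⊤ := ENNReal.ofReal_ne_top
  have hGmeas : Measurable (Gm n ν) := (Gm_continuous n ν).measurable
  have hSmeas : Measurable (Sq n) := (Sq_continuous n).measurable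
  set E : (Fin n → ℂ) → ℝ := fun z => Real.exp (-α * Sq n z ^ m) with hEdef
  have hEmeas : Measurable E := by
    apply Real.measurable_exp.comp
    exact (((Real.continuous_rpow_const hm.le).comp (Sq_continuous n)).measurable).const_mul (-α)
  set μ : Measure (Fin n → ℂ) :=
    volume.withDensity fun z => ENNReal.ofReal (Gm n ν z) with hμdef
  -- measure of sublevel sets
  have measD : ∀ c : ℝ, 0 < c →
      μ {z : Fin n → ℂ | Sq n z < c} = ENNReal.ofReal (c ^ b) * κ := by
    intro c hc
    rw [hμdef, withDensity_apply _ (measSet n c)]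
    rw [← ofReal_integral_eq_lintegral_ofReal (integrableOn_Gm n ν c)
      (ae_of_all _ fun z => Gm_nonneg n ν z)]
    rw [scaling n ν c hc, ← hb, ← hC0def, ENNReal.ofReal_mul (by positivity)]
  -- the layer cake
  set g : ℝ → ℝ := fun t => if t < 1 then (Real.log t⁻¹ / α) ^ s else 0 with hgdef
  have hgmeas : Measurable g := by
    apply Measurable.ite measurableSet_Iio ?_ measurable_const
    exact (Real.continuous_rpow_const (le_of_lt (div_pos hbpos hm))).measurable.comp
      ((Real.measurable_log.comp measurable_inv).div_const α)
  have step3 : ∀ t ∈ Ioi (0:ℝ), μ {z : Fin n → ℂ | t < E z} = ENNReal.ofReal (g t) * κ := by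
    intro t ht
    rw [mem_Ioi] at ht
    by_cases h1 : t < 1
    · have hlog : 0 < Real.log t⁻¹ := Real.log_pos (one_lt_inv_iff₀.mpr ⟨ht, h1⟩)
      set L : ℝ := Real.log t⁻¹ / α with hLdef
      have hL : 0 < L := div_pos hlog hα
      set c : ℝ := L ^ (1/m) with hcdef
      have hc : 0 < c := Real.rpow_pos_of_pos hL _
      have hcm : c ^ m = L := by
        rw [hcdef, ← Real.rpow_mul hL.le, one_div, inv_mul_cancel₀ hm.ne', Real.rpow_one]
      have hset : {z : Fin n → ℂ | t < E z} = {z : Fin n → ℂ | Sq n z < c} := by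
        ext z
        simp only [mem_setOf_eq, hEdef]
        rw [show (t < Real.exp (-α * Sq n z ^ m)) ↔ Real.log t < -α * Sq n z ^ m from
          (Real.log_lt_iff_lt_exp ht).symm]
        rw [neg_mul, lt_neg, ← Real.log_inv]
        rw [show (α * Sq n z ^ m < Real.log t⁻¹) ↔ Sq n z ^ m < L by
          rw [hLdef, lt_div_iff₀ hα, mul_comm]]
        rw [← hcm]
        exact Real.rpow_lt_rpow_iff (Sq_nonneg n z) hc.le hm
      rw [hset, measD c hc]
      congr 1
      rw [hgdef]
      simp only [h1, if_true]
      rw [← Real.rpow_natCast c b, hcdef, ← Real.rpow_mul hL.le,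
        show 1/m * (b:ℝ) = (b:ℝ)/m by field_simp]
    · have hset : {z : Fin n → ℂ | t < E z} = (∅ : Set (Fin n → ℂ)) := by
        ext z
        simp only [mem_setOf_eq, mem_empty_iff_false, iff_false, not_lt]
        calc E z ≤ 1 := by
              rw [hEdef, Real.exp_le_one_iff]
              have h2 : 0 ≤ Sq n z ^ m := Real.rpow_nonneg (Sq_nonneg n z) m
              nlinarith
          _ ≤ t := not_lt.mp h1
      rw [hset, measure_empty, hgdef]
      simp [h1]
  -- now assemble the lintegral computation
  have hintnonneg : ∀ z, 0 ≤ Gm n ν z * E z :=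
    fun z => mul_nonneg (Gm_nonneg n ν z) (Real.exp_pos _).le
  have main : ∫⁻ z, ENNReal.ofReal (Gm n ν z * E z)
      = ENNReal.ofReal (Real.Gamma (s + 1) * α ^ (-s)) * κ := by
    have e1 : ∫⁻ z, ENNReal.ofReal (Gm n ν z * E z)
        = ∫⁻ z, ENNReal.ofReal (E z) ∂μ := by
      rw [hμdef, lintegral_withDensity_eq_lintegral_mul _ hGmeas.ennreal_ofReal
        hEmeas.ennreal_ofReal]
      apply lintegral_congr
      intro z
      rw [Pi.mul_apply, ← ENNReal.ofReal_mul (Gm_nonneg n ν z)]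
    have e2 : ∫⁻ z, ENNReal.ofReal (E z) ∂μ = ∫⁻ t in Ioi 0, μ {z | t < E z} :=
      lintegral_eq_lintegral_meas_lt μ (ae_of_all _ fun z => (Real.exp_pos _).le)
        hEmeas.aemeasurable
    have e3 : ∫⁻ t in Ioi 0, μ {z | t < E z}
        = ∫⁻ t in Ioi 0, ENNReal.ofReal (g t) * κ :=
      setLIntegral_congr_fun measurableSet_Ioi step3
    have e4 : ∫⁻ t in Ioi 0, ENNReal.ofReal (g t) * κ
        = (∫⁻ t in Ioi 0, ENNReal.ofReal (g t)) * κ :=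
      lintegral_mul_const κ hgmeas.ennreal_ofReal
    have e5 : ∫⁻ t in Ioi 0, ENNReal.ofReal (g t)
        = ENNReal.ofReal (Real.Gamma (s + 1) * α ^ (-s)) := by
      rw [← Ioo_union_Ici_eq_Ioi (zero_lt_one : (0:ℝ) < 1)]
      rw [lintegral_union measurableSet_Ici
        (by rw [Set.disjoint_left]; intro a ha ha'; exact absurd ha.2 (not_lt.mpr ha'))]
      have ez : ∫⁻ t in Ici (1:ℝ), ENNReal.ofReal (g t) = 0 := by
        have hz : ∀ t ∈ Ici (1:ℝ), ENNReal.ofReal (g t) = (fun _ : ℝ => (0:ENNReal)) t := by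
          intro t ht
          have h2 : ¬ t < 1 := not_lt.mpr ht
          simp [hgdef, h2]
        rw [setLIntegral_congr_fun measurableSet_Ici hz]
        simp
      rw [ez, add_zero]
      have hIoo : ∀ t ∈ Ioo (0:ℝ) 1, ENNReal.ofReal (g t)
          = ENNReal.ofReal ((Real.log t⁻¹ / α) ^ s) := by
        intro t ht
        rw [hgdef]
        simp [ht.2]
      rw [setLIntegral_congr_fun measurableSet_Ioo hIoo]
      rw [← ofReal_integral_eq_lintegral_ofReal (log_pow_integral s α hs0.le hα).2 ?_]
      · rw [(log_pow_integral s α hs0.le hα).1]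
      · filter_upwards [ae_restrict_mem measurableSet_Ioo] with t ht
        have : 0 < Real.log t⁻¹ := Real.log_pos (one_lt_inv_iff₀.mpr ⟨ht.1, ht.2⟩)
        positivity
    rw [e1, e2, e3, e4, e5]
  -- convert to the Bochner integral
  have hmeas2 : AEStronglyMeasurable (fun z => Gm n ν z * E z)
      (volume : Measure (Fin n → ℂ)) :=
    (hGmeas.mul hEmeas).aestronglyMeasurable
  rw [show (fun z : Fin n → ℂ => Gm n ν z * Real.exp (-α * Sq n z ^ m))
      = fun z => Gm n ν z * E z from rfl] at *
  rw [integral_eq_lintegral_of_nonneg_ae (ae_of_all _ hintnonneg) hmeas2, main]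
  rw [ENNReal.toReal_mul, ENNReal.toReal_ofReal, hκdef, ENNReal.toReal_ofReal hC0]
  · ring
  · have h1 : 0 < Real.Gamma (s + 1) := Real.Gamma_pos_of_pos (by linarith)
    have h2 : 0 < α ^ (-s) := Real.rpow_pos_of_pos hα _
    positivity

/-- Euclidean norm on `ℂⁿ = Fin n → ℂ`. -/
noncomputable def eNorm {n : ℕ} (z : Fin n → ℂ) : ℝ :=
  Real.sqrt (∑ j, ‖z j‖ ^ 2)

/-- For a multiindex `ν` and `α, m > 0`, the squared `L²` norm of the
monomial `z^ν` with respect to `e^{-α|z|^{2m}} dz` on `ℂⁿ` equals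
`πⁿ ν! / (m Γ(n+|ν|)) · Γ((n+|ν|)/m) / α^{(n+|ν|)/m}`. -/
theorem stmt2 (n : ℕ) (hn : 0 < n) (ν : Fin n → ℕ) (α m : ℝ) (hα : 0 < α) (hm : 0 < m) :
    (∫ z : Fin n → ℂ,
        ‖∏ j, z j ^ ν j‖ ^ 2 * Real.exp (-α * eNorm z ^ (2 * m)))
    = (Real.pi ^ n * ∏ j, ((ν j).factorial : ℝ)) /
        (m * Real.Gamma ((n : ℝ) + ∑ j, (ν j : ℝ))) *
      (Real.Gamma (((n : ℝ) + ∑ j, (ν j : ℝ)) / m) /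
        α ^ (((n : ℝ) + ∑ j, (ν j : ℝ)) / m)) := by
  have hb : ((n : ℝ) + ∑ j, (ν j : ℝ)) = ((n + ∑ j, ν j : ℕ) : ℝ) := by push_cast; ring
  set b : ℕ := n + ∑ j, ν j with hbdef
  have hbpos : 0 < (b : ℝ) := by
    have : 0 < b := Nat.lt_of_lt_of_le hn (Nat.le_add_right n _)
    exact_mod_cast this
  have hintegrand : (fun z : Fin n → ℂ =>
      ‖∏ j, z j ^ ν j‖ ^ 2 * Real.exp (-α * eNorm z ^ (2 * m)))
      = fun z => Gm n ν z * Real.exp (-α * Sq n z ^ m) := by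
    funext z
    congr 1
    · unfold Gm
      rw [norm_prod, ← Finset.prod_pow]
      refine Finset.prod_congr rfl fun j _ => ?_
      rw [norm_pow, ← pow_mul, mul_comm]
    · congr 1
      show -α * Real.sqrt (Sq n z) ^ (2 * m) = -α * Sq n z ^ m
      congr 1
      rw [Real.sqrt_eq_rpow, ← Real.rpow_mul (Sq_nonneg n z),
        show (1/2 : ℝ) * (2 * m) = m by ring]
  rw [hintegrand, key n hn ν α m hα hm]
  set C0 : ℝ := ∫ z in {z : Fin n → ℂ | Sq n z < 1}, Gm n ν z with hC0def
  have hanchor : Real.pi ^ n * ∏ j, ((ν j).factorial : ℝ)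
      = C0 * Real.Gamma ((b : ℝ) + 1) := by
    have h1 := key n hn ν 1 1 one_pos one_pos
    have h2 : (fun z : Fin n → ℂ => Gm n ν z * Real.exp (-1 * Sq n z ^ (1:ℝ)))
        = fun z => Gm n ν z * Real.exp (-Sq n z) := by
      funext z
      rw [Real.rpow_one]
      ring_nf
    rw [h2, anchor n ν, ← hbdef] at h1
    rw [h1, div_one, Real.one_rpow, mul_one]
  have hΓpos : 0 < Real.Gamma ((b : ℝ)) := Real.Gamma_pos_of_pos hbpos
  have hspos : 0 < (b : ℝ) / m := div_pos hbpos hm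
  have hΓspos : 0 < Real.Gamma ((b : ℝ) / m) := Real.Gamma_pos_of_pos hspos
  have hC0val : C0 = (Real.pi ^ n * ∏ j, ((ν j).factorial : ℝ)) / ((b:ℝ) * Real.Gamma ((b : ℝ))) := by
    rw [hanchor, Real.Gamma_add_one hbpos.ne']
    field_simp
  rw [hb, hC0val, Real.Gamma_add_one hspos.ne', Real.rpow_neg hα.le]
  have hαs : (0:ℝ) < α ^ ((b:ℝ)/m) := Real.rpow_pos_of_pos hα _
  generalize hA : Real.pi ^ n * ∏ j, ((ν j).factorial : ℝ) = A
  generalize hX : α ^ ((b:ℝ)/m) = X at hαs ⊢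
  generalize hG1 : Real.Gamma ((b:ℝ)) = G1 at hΓpos ⊢
  generalize hG2 : Real.Gamma ((b:ℝ)/m) = G2 at hΓspos ⊢
  field_simp
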